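/- Let (Q,G) be an irreducible affine dynamical system and let X be the closure of the set of extreme points of Q. Then X is the unique minimal subsystem of Q, and the system (X,G) is minimal and strongly proximal. -/

import Mathlib

open MeasureTheory Filter Topology Set

open TopologicalSpace
open scoped NNReal ENNReal
set_option linter.unusedSectionVars false
set_option linter.unnecessarySimpa false
set_option maxHeartbeats 1000000

section Geom
variable {V : Type*} [AddCommGroup V] [Module ℝ V] [TopologicalSpace V]
    [IsTopologicalAddGroup V] [ContinuousSMul ℝ V]

lemma isCompact_convexJoin {s t : Set V} (hs : IsCompact s) (ht : IsCompact t) :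
    IsCompact (convexJoin ℝ s t) := by
  have : convexJoin ℝ s t =
      (fun p : ℝ × V × V => (1 - p.1) • p.2.1 + p.1 • p.2.2) '' (Icc (0:ℝ) 1 ×ˢ s ×ˢ t) := by
    ext x
    simp only [mem_convexJoin, Set.mem_image, Set.mem_prod, Prod.exists]
    constructor
    · rintro ⟨a, ha, b, hb, hx⟩
      rw [segment_eq_image] at hx
      obtain ⟨θ, hθ, hθx⟩ := hx
      exact ⟨θ, a, b, ⟨hθ, ha, hb⟩, hθx⟩
    · rintro ⟨θ, a, b, ⟨hθ, ha, hb⟩, hx⟩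
      exact ⟨a, ha, b, hb, by rw [segment_eq_image]; exact ⟨θ, hθ, hx⟩⟩
  rw [this]
  exact ((isCompact_Icc.prod (hs.prod ht)).image (by fun_prop))

lemma isCompact_convexHull_biUnion {ι : Type*} (t : Finset ι) (D : ι → Set V)
    (hcomp : ∀ i ∈ t, IsCompact (D i)) (hconv : ∀ i ∈ t, Convex ℝ (D i)) :
    IsCompact (convexHull ℝ (⋃ i ∈ t, D i)) := by
  classical
  induction t using Finset.induction with
  | empty => simp
  | @insert a s ha ih =>
    rw [Finset.set_biUnion_insert]
    have hDa : IsCompact (D a) := hcomp a (Finset.mem_insert_self a s)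
    have hDac : Convex ℝ (D a) := hconv a (Finset.mem_insert_self a s)
    have ihs := ih (fun i hi => hcomp i (Finset.mem_insert_of_mem hi))
      (fun i hi => hconv i (Finset.mem_insert_of_mem hi))
    rcases (D a).eq_empty_or_nonempty with h | h
    · simp [h]
      exact ihs
    rcases (⋃ i ∈ s, D i).eq_empty_or_nonempty with h2 | h2
    · rw [h2, Set.union_empty, hDac.convexHull_eq]
      exact hDa
    · rw [← convexHull_convexHull_union_right, ← convexHull_convexHull_union_left,
        Convex.convexHull_union (convex_convexHull ℝ _) (convex_convexHull ℝ _)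
          (h.mono (subset_convexHull ℝ _)) (h2.mono (subset_convexHull ℝ _))]
      rw [hDac.convexHull_eq]
      exact isCompact_convexJoin hDa ihs
end Geom

section Milman
variable {V : Type*} [AddCommGroup V] [Module ℝ V] [TopologicalSpace V]
    [IsTopologicalAddGroup V] [ContinuousSMul ℝ V] [LocallyConvexSpace ℝ V]
    [MetrizableSpace V]

lemma extremePoints_mono_subset {s C : Set V} (hCs : C ⊆ s) {x : V}
    (hx : x ∈ s.extremePoints ℝ) (hxC : x ∈ C) : x ∈ C.extremePoints ℝ :=
  ⟨hxC, fun _ h₁ _ h₂ hseg => hx.2 (hCs h₁) (hCs h₂) hseg⟩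

/-- A version of Milman's theorem: an extreme point of `Q` lying in the closed convex hull
of a closed subset `A ⊆ Q` lies in `A`. -/
lemma milman_mem_of_extreme {Q A : Set V} (hQcomp : IsCompact Q) (hQconv : Convex ℝ Q)
    (hA : IsClosed A) (hAQ : A ⊆ Q) {x₀ : V} (hx : x₀ ∈ Q.extremePoints ℝ)
    (hmem : x₀ ∈ closure (convexHull ℝ A)) : x₀ ∈ A := by
  letI : MetricSpace V := metrizableSpaceMetric V
  rcases A.eq_empty_or_nonempty with rfl | hAne
  · simpa using hmem
  rw [← hA.closure_eq, mem_closure_iff]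
  intro W hWopen hx₀W
  have hcont : Continuous fun v : V => x₀ - v := by fun_prop
  have hU₂ : (fun v : V => x₀ - v) ⁻¹' W ∈ 𝓝 (0 : V) := by
    apply hcont.continuousAt.preimage_mem_nhds
    simpa using hWopen.mem_nhds hx₀W
  obtain ⟨U₃, hU₃nhds, hU₃closed, hU₃sub⟩ := exists_mem_nhds_isClosed_subset hU₂
  obtain ⟨U, ⟨hUnhds, hUconv⟩, hUsub⟩ :=
    (LocallyConvexSpace.convex_basis_zero ℝ V).mem_iff.mp hU₃nhds
  have hAcomp : IsCompact A := hQcomp.of_isClosed_subset hA hAQ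
  have hnhd : ∀ (a : V), a ∈ A → (fun v => a + v) '' U ∈ 𝓝 a := by
    intro a _
    have hom : IsOpenMap (fun v : V => a + v) := (Homeomorph.addLeft a).isOpenMap
    have h := hom.image_mem_nhds hUnhds
    rwa [add_zero] at h
  obtain ⟨tF, htF⟩ := hAcomp.elim_nhds_subcover' (fun a _ => (fun v => (a:V) + v) '' U) hnhd
  set D : A → Set V := fun a => closure (convexHull ℝ (A ∩ ((fun v => (a:V) + v) '' U))) with hD
  have hDQ : ∀ a, D a ⊆ Q := fun a => closure_minimal
    (convexHull_min (Set.inter_subset_left.trans hAQ) hQconv) hQcomp.isClosed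
  have hDcomp : ∀ a, IsCompact (D a) :=
    fun a => hQcomp.of_isClosed_subset isClosed_closure (hDQ a)
  have hDconv : ∀ a, Convex ℝ (D a) := fun a => (convex_convexHull ℝ _).closure
  set C := convexHull ℝ (⋃ a ∈ tF, D a) with hC
  have hCcomp : IsCompact C :=
    isCompact_convexHull_biUnion tF D (fun a _ => hDcomp a) (fun a _ => hDconv a)
  have hCQ : C ⊆ Q := convexHull_min (Set.iUnion₂_subset fun a _ => hDQ a) hQconv
  have hAC : A ⊆ ⋃ a ∈ tF, D a := by
    intro a' ha'
    have ha'' := htF ha'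
    simp only [Set.mem_iUnion] at ha'' ⊢
    obtain ⟨a, haF, hmem'⟩ := ha''
    exact ⟨a, haF, subset_closure (subset_convexHull ℝ _ ⟨ha', hmem'⟩)⟩
  have hx₀C : x₀ ∈ C := by
    have hsub : closure (convexHull ℝ A) ⊆ C := closure_minimal
      (convexHull_min (hAC.trans (subset_convexHull ℝ _)) (convex_convexHull ℝ _))
      hCcomp.isClosed
    exact hsub hmem
  have hx₀ext : x₀ ∈ C.extremePoints ℝ := extremePoints_mono_subset hCQ hx hx₀C
  have hx₀U := extremePoints_convexHull_subset hx₀ext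
  simp only [Set.mem_iUnion] at hx₀U
  obtain ⟨a, _, hx₀D⟩ := hx₀U
  have hDsub : D a ⊆ (fun v => (a:V) + v) '' U₃ := by
    have h1 : convexHull ℝ (A ∩ ((fun v => (a:V) + v) '' U)) ⊆ (fun v => (a:V) + v) '' U :=
      convexHull_min Set.inter_subset_right (hUconv.translate _)
    refine (closure_mono h1).trans ?_
    have h2 : closure ((fun v => (a:V) + v) '' U) = (fun v => (a:V) + v) '' closure U :=
      ((Homeomorph.addLeft (a:V)).image_closure U).symm
    rw [h2]
    exact Set.image_mono (closure_minimal hUsub hU₃closed)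
  obtain ⟨u, hu, hau⟩ := hDsub hx₀D
  have haW : (a : V) ∈ W := by
    have h3 : x₀ - u ∈ W := hU₃sub hu
    have h4 : (a : V) = x₀ - u := eq_sub_of_add_eq hau
    rwa [← h4] at h3
  exact ⟨a, haW, a.2⟩

end Milman

section Bary
variable {V : Type*} [AddCommGroup V] [Module ℝ V] [TopologicalSpace V]
    [IsTopologicalAddGroup V] [ContinuousSMul ℝ V] [LocallyConvexSpace ℝ V]
    [MetrizableSpace V] [MeasurableSpace V] [BorelSpace V]

lemma aesm_of_compact_support {Q : Set V} (hQcomp : IsCompact Q) {m : Measure V}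
    (hmQc : m Qᶜ = 0) {E : Type*} [NormedAddCommGroup E] {f : V → E} (hf : Continuous f) :
    AEStronglyMeasurable f m := by
  letI : PseudoMetricSpace V := (metrizableSpaceMetric V).toPseudoMetricSpace
  have hQsep : TopologicalSpace.IsSeparable Q := hQcomp.isSeparable
  have h1 : AEStronglyMeasurable f (m.restrict Q) :=
    hf.continuousOn.aestronglyMeasurable_of_isSeparable hQcomp.measurableSet hQsep
  have h2 : m.restrict Q = m :=
    Measure.restrict_eq_self_of_ae_mem (mem_ae_iff.mpr hmQc)
  rwa [h2] at h1

lemma integrable_of_compact_support {Q : Set V} (hQcomp : IsCompact Q) {m : Measure V}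
    [IsFiniteMeasure m] (hmQc : m Qᶜ = 0) {E : Type*} [NormedAddCommGroup E] {f : V → E}
    (hf : Continuous f) : Integrable f m := by
  obtain ⟨C, hC⟩ := hQcomp.exists_bound_of_continuousOn hf.continuousOn
  have hae : ∀ᵐ v ∂m, v ∈ Q := by
    rw [MeasureTheory.ae_iff]; exact hmQc
  exact (integrable_const C).mono' (aesm_of_compact_support hQcomp hmQc hf)
    (hae.mono fun v hv => hC v hv)

def IsBary (m : Measure V) (b : V) : Prop := ∀ f : V →L[ℝ] ℝ, f b = ∫ v, f v ∂m

lemma compl_null_of_one {Q : Set V} (hQmeas : MeasurableSet Q) {m : Measure V}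
    [IsProbabilityMeasure m] (hm : m Q = 1) : m Qᶜ = 0 := by
  rw [measure_compl hQmeas (by simp [hm]), hm]
  simp

/-- Existence of a barycenter for a probability measure supported on a
compact convex set. -/
lemma exists_isBary {Q : Set V} (hQcomp : IsCompact Q) (hQconv : Convex ℝ Q)
    {m : Measure V} [IsProbabilityMeasure m] (hm : m Q = 1) : ∃ b ∈ Q, IsBary m b := by
  letI : MetricSpace V := metrizableSpaceMetric V
  have hmQc : m Qᶜ = 0 := compl_null_of_one hQcomp.measurableSet hm
  have hQne : Q.Nonempty := by
    by_contra h
    rw [Set.not_nonempty_iff_eq_empty] at h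
    simp [h] at hm
  classical
  set Cs : Finset (V →L[ℝ] ℝ) → Set V :=
    fun F => {b ∈ Q | ∀ f ∈ F, f b = ∫ v, f v ∂m} with hCs
  have hclosed : ∀ F, IsClosed (Cs F) := by
    intro F
    have : Cs F = Q ∩ ⋂ f ∈ F, {b | f b = ∫ v, f v ∂m} := by
      ext b; simp [hCs, Set.mem_iInter]
    rw [this]
    exact hQcomp.isClosed.inter (isClosed_biInter fun f _ =>
      isClosed_eq f.continuous continuous_const)
  have hcomp : ∀ F, IsCompact (Cs F) :=
    fun F => hQcomp.of_isClosed_subset (hclosed F) (fun b hb => hb.1)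
  have hne : ∀ F, (Cs F).Nonempty := by
    intro F
    set T : V →L[ℝ] (F → ℝ) := ContinuousLinearMap.pi (fun i : F => (i : V →L[ℝ] ℝ)) with hT
    have hTint : Integrable (fun v => T v) m :=
      integrable_of_compact_support hQcomp hmQc T.continuous
    set p : F → ℝ := ∫ v, T v ∂m with hp
    have hproj : ∀ i : F, p i = ∫ v, (i : V →L[ℝ] ℝ) v ∂m := by
      intro i
      have := (ContinuousLinearMap.proj (R := ℝ) (φ := fun _ : F => ℝ) i).integral_comp_comm hTint
      simpa [hp, hT] using this.symm
    by_cases hmem : p ∈ T '' Q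
    · obtain ⟨b, hbQ, hb⟩ := hmem
      refine ⟨b, hbQ, fun f hf => ?_⟩
      have : T b ⟨f, hf⟩ = p ⟨f, hf⟩ := by rw [hb]
      simpa [hT, hproj ⟨f, hf⟩] using this
    · exfalso
      have himc : Convex ℝ (T '' Q) := hQconv.linear_image T.toLinearMap
      have himcl : IsClosed (T '' Q) := (hQcomp.image T.continuous).isClosed
      obtain ⟨φ, c, hlt, hgt⟩ := geometric_hahn_banach_closed_point himc himcl hmem
      have h1 : φ p = ∫ v, φ (T v) ∂m := (φ.integral_comp_comm hTint).symm
      have h2 : ∫ v, φ (T v) ∂m ≤ c := by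
        have hint : Integrable (fun v => φ (T v)) m :=
          integrable_of_compact_support hQcomp hmQc (φ.continuous.comp T.continuous)
        calc ∫ v, φ (T v) ∂m ≤ ∫ _, c ∂m := by
              refine integral_mono_ae hint (integrable_const c) ?_
              have hae : ∀ᵐ v ∂m, v ∈ Q := by
                rw [MeasureTheory.ae_iff]; exact hmQc
              exact hae.mono fun v hv => (hlt _ ⟨v, hv, rfl⟩).le
          _ = c := by simp
      rw [h1] at hgt
      linarith
  have hdir : Directed (fun x1 x2 : Set V => x1 ⊇ x2) Cs := by
    intro F₁ F₂
    refine ⟨F₁ ∪ F₂, fun b hb => ⟨hb.1, fun f hf => hb.2 f (Finset.mem_union_left _ hf)⟩,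
      fun b hb => ⟨hb.1, fun f hf => hb.2 f (Finset.mem_union_right _ hf)⟩⟩
  obtain ⟨b, hb⟩ := IsCompact.nonempty_iInter_of_directed_nonempty_isCompact_isClosed
    Cs hdir hne hcomp hclosed
  simp only [Set.mem_iInter] at hb
  exact ⟨b, (hb ∅).1, fun f => (hb {f}).2 f (Finset.mem_singleton_self f)⟩

lemma eq_of_forall_dual_eq {x y : V} (h : ∀ f : V →L[ℝ] ℝ, f x = f y) : x = y := by
  letI : MetricSpace V := metrizableSpaceMetric V
  by_contra hne
  obtain ⟨f, hf⟩ := SeparatingDual.exists_separating_of_ne (R := ℝ) hne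
  exact hf (h f)

/-- A barycenter of a measure supported in a closed convex set lies in that set. -/
lemma isBary_mem_of_support {Q D : Set V} (hQcomp : IsCompact Q) {m : Measure V}
    [IsProbabilityMeasure m] (hmQc : m Qᶜ = 0) (hDcl : IsClosed D) (hDconv : Convex ℝ D)
    (hmDc : m Dᶜ = 0) {b : V} (hb : IsBary m b) : b ∈ D := by
  by_contra hbD
  obtain ⟨f, c, hlt, hgt⟩ := geometric_hahn_banach_closed_point hDconv hDcl hbD
  have hint : Integrable f m := integrable_of_compact_support hQcomp hmQc f.continuous
  have hae : ∀ᵐ v ∂m, v ∈ D := by rw [MeasureTheory.ae_iff]; exact hmDc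
  have h2 : ∫ v, f v ∂m ≤ c := by
    calc ∫ v, f v ∂m ≤ ∫ _, c ∂m :=
          integral_mono_ae hint (integrable_const c) (hae.mono fun v hv => (hlt v hv).le)
      _ = c := by simp
  rw [hb f] at hgt
  linarith

/-- The barycenter transforms correctly under continuous affine maps. -/
lemma isBary_map {Q : Set V} (hQcomp : IsCompact Q) {m : Measure V} [IsProbabilityMeasure m]
    (hmQc : m Qᶜ = 0) {φ : V →ᵃ[ℝ] V} (hφ : Continuous φ) {b : V} (hb : IsBary m b) :
    IsBary (Measure.map φ m) (φ b) := by
  intro f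
  set lin : V →L[ℝ] V := ⟨φ.linear, AffineMap.continuous_linear_iff.mpr hφ⟩ with hlin
  have key : ∀ v : V, f (φ v) = (f.comp lin) v + f (φ 0) := by
    intro v
    have : φ v = φ.linear v + φ 0 := by
      conv_lhs => rw [show (φ : V → V) = ⇑φ.linear + fun _ => φ 0 from AffineMap.decomp φ]
      rfl
    rw [this, map_add]
    rfl
  have hmapc : Measure.map φ m ((φ '' Q)ᶜ) = 0 := by
    rw [Measure.map_apply hφ.measurable (hQcomp.image hφ).isClosed.measurableSet.compl]
    refine measure_mono_null ?_ hmQc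
    intro v hv
    exact fun hvQ => hv (Set.mem_image_of_mem φ hvQ)
  haveI : IsProbabilityMeasure (Measure.map φ m) := Measure.isProbabilityMeasure_map
    hφ.measurable.aemeasurable
  have h1 : ∫ v, f v ∂(Measure.map φ m) = ∫ v, f (φ v) ∂m :=
    integral_map hφ.measurable.aemeasurable
      (aesm_of_compact_support (hQcomp.image hφ) hmapc f.continuous)
  have h2 : ∫ v, f (φ v) ∂m = (f.comp lin) b + f (φ 0) := by
    have hfun : (fun v => f (φ v)) = fun v => (f.comp lin) v + f (φ 0) := funext key
    rw [hfun, integral_add (integrable_of_compact_support hQcomp hmQc (f.comp lin).continuous)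
      (integrable_const _), integral_const, probReal_univ, one_smul,
      ← hb (f.comp lin)]
  rw [h1, h2, key b]

/-- Barycenters of finite convex combinations of probability measures. -/
lemma isBary_finsum {Q : Set V} (hQcomp : IsCompact Q) {ι : Type*} (t : Finset ι)
    (w : ι → ℝ) (hw0 : ∀ i ∈ t, 0 ≤ w i) (ms : ι → Measure V)
    [hprob : ∀ i, IsProbabilityMeasure (ms i)] (hms : ∀ i ∈ t, (ms i) Qᶜ = 0) (bs : ι → V)
    (hbs : ∀ i ∈ t, IsBary (ms i) (bs i)) :
    IsBary (∑ i ∈ t, ENNReal.ofReal (w i) • ms i) (∑ i ∈ t, w i • bs i) := by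
  intro f
  have hint : ∀ i ∈ t, Integrable f (ENNReal.ofReal (w i) • ms i) := fun i hi =>
    (integrable_of_compact_support hQcomp (hms i hi) f.continuous).smul_measure
      ENNReal.ofReal_ne_top
  rw [integral_finset_sum_measure hint, map_sum]
  refine Finset.sum_congr rfl fun i hi => ?_
  rw [integral_smul_measure, ← (hbs i hi) f, ENNReal.toReal_ofReal (hw0 i hi)]
  exact (f.map_smul _ _).symm ▸ rfl

/-- Key concentration estimate: probability measures on `Q` whose barycenter is close to an
extreme point `x₀` put almost all their mass near `x₀`. -/
lemma concentration {Q : Set V} (hQcomp : IsCompact Q) (hQconv : Convex ℝ Q) (hQne : Q.Nonempty)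
    {x₀ : V} (hx₀ : x₀ ∈ Q.extremePoints ℝ) {U : Set V} (hU : IsOpen U) (hx₀U : x₀ ∈ U)
    {δ : ℝ} (hδ : 0 < δ) :
    ∃ W ∈ 𝓝 x₀, ∀ m : Measure V, IsProbabilityMeasure m → m Q = 1 →
      ∀ b, IsBary m b → b ∈ W → m (Q \ U) < ENNReal.ofReal δ := by
  letI : MetricSpace V := metrizableSpaceMetric V
  set A := Q \ U with hA
  have hAcl : IsClosed A := hQcomp.isClosed.sdiff hU
  have hAQ : A ⊆ Q := Set.diff_subset
  rcases A.eq_empty_or_nonempty with hAe | hAne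
  · refine ⟨Set.univ, Filter.univ_mem, fun m _ _ b _ _ => ?_⟩
    rw [hAe]
    simpa using ENNReal.ofReal_pos.mpr hδ
  set D := closure (convexHull ℝ A) with hD
  have hDQ : D ⊆ Q := closure_minimal (convexHull_min hAQ hQconv) hQcomp.isClosed
  have hDcomp : IsCompact D := hQcomp.of_isClosed_subset isClosed_closure hDQ
  have hDconv : Convex ℝ D := (convex_convexHull ℝ _).closure
  have hAD : A ⊆ D := (subset_convexHull ℝ A).trans subset_closure
  have hx₀D : x₀ ∉ D := fun h => (milman_mem_of_extreme hQcomp hQconv hAcl hAQ hx₀ h).2 hx₀U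
  set δ' := min δ 1 with hδ'
  have hδ'pos : 0 < δ' := lt_min hδ one_pos
  have hδ'le : δ' ≤ 1 := min_le_right _ _
  set K := (fun p : ℝ × V × V => p.1 • p.2.1 + (1 - p.1) • p.2.2) '' ((Icc δ' 1) ×ˢ D ×ˢ Q)
    with hK
  have hKcomp : IsCompact K := ((isCompact_Icc.prod (hDcomp.prod hQcomp)).image (by fun_prop))
  have hx₀K : x₀ ∉ K := by
    rintro ⟨⟨t, x, y⟩, ⟨⟨ht1, ht2⟩, hxD, hyQ⟩, heq⟩
    simp only at heq
    rcases eq_or_lt_of_le ht2 with rfl | htlt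
    · rw [one_smul, sub_self, zero_smul, add_zero] at heq
      exact hx₀D (heq ▸ hxD)
    · have hos : x₀ ∈ openSegment ℝ x y :=
        ⟨t, 1 - t, hδ'pos.trans_le ht1, by linarith, by ring, heq⟩
      exact hx₀D ((hx₀.2 (hDQ hxD) hyQ hos) ▸ hxD)
  refine ⟨Kᶜ, hKcomp.isClosed.isOpen_compl.mem_nhds hx₀K, ?_⟩
  intro m hprob hmQ b hbary hbW
  by_contra hcon
  push_neg at hcon
  refine hbW ?_
  haveI := hprob
  have hmQc : m Qᶜ = 0 := compl_null_of_one hQcomp.measurableSet hmQ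
  have hAmeas : MeasurableSet A := hQcomp.measurableSet.diff hU.measurableSet
  have hmA1 : m A ≤ 1 := le_trans (measure_mono hAQ) hmQ.le
  have hmAne0 : m A ≠ 0 := by
    intro h
    rw [h] at hcon
    exact (ENNReal.ofReal_pos.mpr hδ).not_ge hcon
  have hmAnetop : m A ≠ ⊤ := (hmA1.trans_lt ENNReal.one_lt_top).ne
  set t := (m A).toReal with ht
  have htδ' : δ' ≤ t := by
    have h1 : ENNReal.ofReal δ' ≤ m A :=
      le_trans (ENNReal.ofReal_le_ofReal (min_le_left _ _)) hcon
    have := ENNReal.toReal_mono hmAnetop h1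
    rwa [ENNReal.toReal_ofReal hδ'pos.le] at this
  have ht1 : t ≤ 1 := by
    have h2 := ENNReal.toReal_mono (by simp) hmA1
    rwa [ENNReal.toReal_one] at h2
  set A' := Q ∩ U with hA'
  have hA'meas : MeasurableSet A' := hQcomp.measurableSet.inter hU.measurableSet
  have hsum : m A + m A' = 1 := by
    rw [← measure_union (Set.disjoint_left.mpr fun v hv h'v => hv.2 h'v.2) hA'meas,
      Set.diff_union_inter, hmQ]
  have hmA'top : m A' ≠ ⊤ := by
    intro h
    rw [h] at hsum
    simp at hsum
  have hA'subAc : A' ⊆ Aᶜ := fun v hv hvA => hvA.2 hv.2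
  rcases eq_or_ne (m A') 0 with hA'0 | hA'0
  · -- all mass on `A ⊆ D`; the barycenter is in `D`
    have hmA : m A = 1 := by rw [hA'0, add_zero] at hsum; exact hsum
    have hmAc : m Aᶜ = 0 := by
      rw [measure_compl hAmeas hmAnetop, hmA]
      simp
    have hmDc : m Dᶜ = 0 := measure_mono_null (Set.compl_subset_compl.mpr hAD) hmAc
    have hbD : b ∈ D := isBary_mem_of_support hQcomp hmQc isClosed_closure hDconv hmDc hbary
    exact ⟨⟨1, b, hQne.some⟩, ⟨⟨hδ'le, le_refl 1⟩, hbD, hQne.some_mem⟩, by simp⟩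
  · set m₁ : Measure V := (m A)⁻¹ • m.restrict A with hm₁
    set m₂ : Measure V := (m A')⁻¹ • m.restrict A' with hm₂
    haveI hm₁prob : IsProbabilityMeasure m₁ := by
      constructor
      rw [hm₁, Measure.smul_apply, Measure.restrict_apply_univ, smul_eq_mul]
      exact ENNReal.inv_mul_cancel hmAne0 hmAnetop
    haveI hm₂prob : IsProbabilityMeasure m₂ := by
      constructor
      rw [hm₂, Measure.smul_apply, Measure.restrict_apply_univ, smul_eq_mul]
      exact ENNReal.inv_mul_cancel hA'0 hmA'top
    have hm₁Ac : m₁ Aᶜ = 0 := by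
      rw [hm₁, Measure.smul_apply, Measure.restrict_apply hAmeas.compl]
      simp
    have hm₂A'c : m₂ A'ᶜ = 0 := by
      rw [hm₂, Measure.smul_apply, Measure.restrict_apply hA'meas.compl]
      simp
    have hm₁D : m₁ D = 1 := by
      rw [← prob_compl_eq_zero_iff (hDcomp.isClosed.measurableSet)]
      exact measure_mono_null (Set.compl_subset_compl.mpr hAD) hm₁Ac
    have hm₂Q : m₂ Q = 1 := by
      rw [← prob_compl_eq_zero_iff hQcomp.measurableSet]
      exact measure_mono_null (Set.compl_subset_compl.mpr Set.inter_subset_left) hm₂A'c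
    obtain ⟨b₁, hb₁D, hb₁⟩ := exists_isBary hDcomp hDconv (m := m₁) hm₁D
    obtain ⟨b₂, hb₂Q, hb₂⟩ := exists_isBary hQcomp hQconv (m := m₂) hm₂Q
    have htne : t ≠ 0 := (hδ'pos.trans_le htδ').ne'
    have ht'ne : (m A').toReal = 1 - t := by
      have h2 := congrArg ENNReal.toReal hsum
      rw [ENNReal.toReal_add hmAnetop hmA'top] at h2
      simp only [ENNReal.toReal_one] at h2
      linarith
    have hbeq : b = t • b₁ + (1 - t) • b₂ := by
      apply eq_of_forall_dual_eq
      intro f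
      have hint : Integrable f m := integrable_of_compact_support hQcomp hmQc f.continuous
      have hsplit : ∫ v, f v ∂m = ∫ v in A, f v ∂m + ∫ v in Aᶜ, f v ∂m :=
        (integral_add_compl hAmeas hint).symm
      have hAc : m.restrict Aᶜ = m.restrict A' := by
        refine Measure.restrict_congr_set ?_
        rw [MeasureTheory.ae_eq_set]
        constructor
        · refine measure_mono_null (fun v hv => ?_) hmQc
          intro hvQ
          rcases Classical.em (v ∈ U) with h | h
          · exact hv.2 ⟨hvQ, h⟩
          · exact hv.1 ⟨hvQ, h⟩
        · have hemp : A' \ Aᶜ = (∅ : Set V) := by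
            ext v
            simp only [Set.mem_diff, Set.mem_empty_iff_false, iff_false, not_and, not_not]
            exact fun hv1 => not_not.mp fun hv2 => hv2 (hA'subAc hv1)
          rw [hemp]
          simp
      have h₁ : ∫ v in A, f v ∂m = t * f b₁ := by
        have hb1f := hb₁ f
        rw [hm₁, integral_smul_measure, ENNReal.toReal_inv, ← ht, smul_eq_mul] at hb1f
        rw [hb1f]
        field_simp
      have h₂ : ∫ v in Aᶜ, f v ∂m = (1 - t) * f b₂ := by
        have hb2f := hb₂ f
        rw [hm₂, integral_smul_measure, ENNReal.toReal_inv, ht'ne, smul_eq_mul] at hb2f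
        rw [show (∫ v in Aᶜ, f v ∂m) = ∫ v in A', f v ∂m by rw [hAc], hb2f]
        rcases eq_or_ne (1 - t) 0 with h0 | h0
        · exfalso
          have hz : (m A').toReal = 0 := by rw [ht'ne, h0]
          rcases ENNReal.toReal_eq_zero_iff _ |>.mp hz with h | h
          · exact hA'0 h
          · exact hmA'top h
        · field_simp
      rw [hbary f, hsplit, h₁, h₂, f.map_add, f.map_smul, f.map_smul, smul_eq_mul, smul_eq_mul]
    rw [hbeq]
    exact ⟨⟨t, b₁, b₂⟩, ⟨⟨htδ', ht1⟩, hb₁D, hb₂Q⟩, rfl⟩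

end Bary

/-- The point mass `δ_x` as a probability measure. -/
noncomputable def diracPM {X : Type*} [MeasurableSpace X] (x : X) : ProbabilityMeasure X :=
  ⟨MeasureTheory.Measure.dirac x, inferInstance⟩

/-- For an irreducible affine dynamical system `(Q,G)`, the closure `X` of the set of
extreme points of `Q` is the unique minimal subsystem of `Q`, and the action of `G`
on `X` is minimal and strongly proximal. -/
theorem extremePoints_closure_unique_minimal_and_stronglyProximal
    {G V : Type*} [Group G] [AddCommGroup V] [Module ℝ V] [TopologicalSpace V]
    [IsTopologicalAddGroup V] [ContinuousSMul ℝ V] [LocallyConvexSpace ℝ V]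
    [TopologicalSpace.MetrizableSpace V] [MeasurableSpace V] [BorelSpace V]
    (Q : Set V) (hQcomp : IsCompact Q) (hQne : Q.Nonempty) (hQconv : Convex ℝ Q)
    (σ : G → V →ᵃ[ℝ] V) (hσcont : ∀ g : G, Continuous (σ g))
    (hσmul : ∀ (g h : G), ∀ v ∈ Q, σ (g * h) v = σ g (σ h v))
    (hσone : ∀ v ∈ Q, σ 1 v = v)
    (hQinv : ∀ g : G, σ g '' Q = Q)
    (hirr : ∀ B ⊆ Q, B.Nonempty → IsClosed B → Convex ℝ B →
      (∀ g : G, σ g '' B ⊆ B) → B = Q) :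
    -- `X := closure (extremePoints Q)` is a minimal subsystem of `Q`:
    (closure (Q.extremePoints ℝ) ⊆ Q ∧ (closure (Q.extremePoints ℝ)).Nonempty ∧
      (∀ g : G, σ g '' closure (Q.extremePoints ℝ) ⊆ closure (Q.extremePoints ℝ)) ∧
      (∀ N ⊆ closure (Q.extremePoints ℝ), N.Nonempty → IsClosed N →
        (∀ g : G, σ g '' N ⊆ N) → N = closure (Q.extremePoints ℝ))) ∧
    -- and it is the unique minimal subsystem of `Q`:
    (∀ M ⊆ Q, M.Nonempty → IsClosed M → (∀ g : G, σ g '' M ⊆ M) →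
      (∀ N ⊆ M, N.Nonempty → IsClosed N → (∀ g : G, σ g '' N ⊆ N) → N = M) →
      M = closure (Q.extremePoints ℝ)) ∧
    -- and the action of `G` on it is strongly proximal:
    (∀ μ : ProbabilityMeasure V, μ (closure (Q.extremePoints ℝ)) = 1 →
      ∃ gs : ℕ → G, ∃ x ∈ closure (Q.extremePoints ℝ),
        Tendsto (fun n => μ.map ((hσcont (gs n)).measurable.aemeasurable))
          atTop (𝓝 (diracPM x))) := by
  classical
  letI : MetricSpace V := TopologicalSpace.metrizableSpaceMetric V
  have hQcl : IsClosed Q := hQcomp.isClosed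
  have hEQ : closure (Q.extremePoints ℝ) ⊆ Q := closure_minimal extremePoints_subset hQcl
  have hQmeas : MeasurableSet Q := hQcl.measurableSet
  have himg : ∀ g : G, ∀ v ∈ Q, σ g v ∈ Q := by
    intro g v hv
    rw [← hQinv g]
    exact Set.mem_image_of_mem _ hv
  have hginv : ∀ g : G, ∀ v ∈ Q, σ g⁻¹ (σ g v) = v := by
    intro g v hv
    rw [← hσmul g⁻¹ g v hv, inv_mul_cancel, hσone v hv]
  have hext : ∀ g : G, σ g '' (Q.extremePoints ℝ) ⊆ Q.extremePoints ℝ := by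
    rintro g _ ⟨x, hx, rfl⟩
    refine ⟨himg g x hx.1, ?_⟩
    intro x₁ h₁ x₂ h₂ hseg
    have h₁' : σ g⁻¹ x₁ ∈ Q := himg g⁻¹ x₁ h₁
    have h₂' : σ g⁻¹ x₂ ∈ Q := himg g⁻¹ x₂ h₂
    have hpull : x ∈ openSegment ℝ (σ g⁻¹ x₁) (σ g⁻¹ x₂) := by
      rw [← image_openSegment ℝ (σ g⁻¹) x₁ x₂]
      exact ⟨σ g x, hseg, hginv g x hx.1⟩
    obtain e₁ := hx.2 h₁' h₂' hpull
    have hb₁ := hginv g⁻¹ x₁ h₁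
    have hb₂ := hginv g⁻¹ x₂ h₂
    rw [inv_inv] at hb₁ hb₂
    exact by rw [← hb₁, e₁]
  have hEinv : ∀ g : G, σ g '' closure (Q.extremePoints ℝ) ⊆ closure (Q.extremePoints ℝ) :=
    fun g => (image_closure_subset_closure_image (hσcont g)).trans (closure_mono (hext g))
  have hEclosed : IsClosed (closure (Q.extremePoints ℝ)) := isClosed_closure
  have hEne : (closure (Q.extremePoints ℝ)).Nonempty :=
    (hQcomp.extremePoints_nonempty hQne).mono subset_closure
  have hkey : ∀ N ⊆ Q, N.Nonempty → IsClosed N → (∀ g : G, σ g '' N ⊆ N) →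
      closure (Q.extremePoints ℝ) ⊆ N := by
    intro N hNQ hNne hNcl hNinv
    have hBQ : closure (convexHull ℝ N) ⊆ Q := closure_minimal (convexHull_min hNQ hQconv) hQcl
    have hBinv : ∀ g : G, σ g '' closure (convexHull ℝ N) ⊆ closure (convexHull ℝ N) := by
      intro g
      refine (image_closure_subset_closure_image (hσcont g)).trans (closure_mono ?_)
      rw [AffineMap.image_convexHull]
      exact convexHull_mono (hNinv g)
    have hBeq : closure (convexHull ℝ N) = Q := hirr _ hBQ
      (hNne.mono ((subset_convexHull ℝ N).trans subset_closure))
      isClosed_closure (convex_convexHull ℝ N).closure hBinv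
    have hxN : Q.extremePoints ℝ ⊆ N := fun x hx =>
      milman_mem_of_extreme hQcomp hQconv hNcl hNQ hx (hBeq.symm ▸ extremePoints_subset hx)
    exact closure_minimal hxN hNcl
  refine ⟨⟨hEQ, hEne, hEinv, ?_⟩, ?_, ?_⟩
  · intro N hNE hNne hNcl hNinv
    exact subset_antisymm hNE (hkey N (hNE.trans hEQ) hNne hNcl hNinv)
  · intro M hMQ hMne hMcl hMinv hMmin
    exact (hMmin _ (hkey M hMQ hMne hMcl hMinv) hEne hEclosed hEinv).symm
  · intro μ hμE
    have hμE' : (μ : Measure V) (closure (Q.extremePoints ℝ)) = 1 := by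
      have h := congrArg (fun x : ℝ≥0 => (x : ℝ≥0∞)) hμE
      simpa [ProbabilityMeasure.ennreal_coeFn_eq_coeFn_toMeasure] using h
    have hμQ : (μ : Measure V) Q = 1 :=
      le_antisymm prob_le_one (hμE' ▸ measure_mono hEQ)
    have hμQc : (μ : Measure V) Qᶜ = 0 := compl_null_of_one hQmeas hμQ
    obtain ⟨b₀, hb₀Q, hb₀⟩ := exists_isBary hQcomp hQconv hμQ
    have hRQ : Set.range (fun g : G => σ g b₀) ⊆ Q := by
      rintro _ ⟨g, rfl⟩
      exact himg g b₀ hb₀Q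
    have hBeq : closure (convexHull ℝ (Set.range (fun g : G => σ g b₀))) = Q := by
      refine hirr _ (closure_minimal (convexHull_min hRQ hQconv) hQcl)
        ⟨b₀, subset_closure (subset_convexHull ℝ _ ⟨1, hσone b₀ hb₀Q⟩)⟩ isClosed_closure
        (convex_convexHull ℝ _).closure ?_
      intro g
      refine (image_closure_subset_closure_image (hσcont g)).trans (closure_mono ?_)
      rw [AffineMap.image_convexHull]
      refine convexHull_mono ?_
      rintro _ ⟨_, ⟨h, rfl⟩, rfl⟩
      exact ⟨g * h, hσmul g h b₀ hb₀Q⟩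
    obtain ⟨x₀, hx₀⟩ := hQcomp.extremePoints_nonempty hQne
    have hx₀E : x₀ ∈ closure (Q.extremePoints ℝ) := subset_closure hx₀
    have hx₀B : x₀ ∈ closure (convexHull ℝ (Set.range (fun g : G => σ g b₀))) :=
      hBeq.symm ▸ extremePoints_subset hx₀
    have hstep : ∀ n : ℕ, ∃ g : G,
        Measure.map (σ g) (μ : Measure V) (Q \ Metric.ball x₀ (1/(n+1))) <
          ENNReal.ofReal (1/(n+1)) := by
      intro n
      have hεpos : (0:ℝ) < 1/(n+1) := by positivity
      obtain ⟨W, hWnhds, hWprop⟩ := concentration hQcomp hQconv hQne hx₀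
        Metric.isOpen_ball (Metric.mem_ball_self hεpos) hεpos
      obtain ⟨p, hpW, hpc⟩ := mem_closure_iff_nhds.mp hx₀B W hWnhds
      rw [convexHull_eq] at hpc
      obtain ⟨ι, tF, w, z, hw0, hw1, hzR, hcm⟩ := hpc
      have hzR' : ∀ i ∈ tF, ∃ gg : G, σ gg b₀ = z i := fun i hi => hzR i hi
      choose! gg hgg using hzR'
      set ms : ι → Measure V := fun i => Measure.map (σ (gg i)) (μ : Measure V) with hms
      haveI hmsP : ∀ i, IsProbabilityMeasure (ms i) := fun i =>
        Measure.isProbabilityMeasure_map (hσcont (gg i)).measurable.aemeasurable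
      have hmsQ : ∀ i ∈ tF, ms i Q = 1 := by
        intro i hi
        rw [hms]
        simp only
        rw [Measure.map_apply (hσcont (gg i)).measurable hQmeas]
        refine le_antisymm prob_le_one ?_
        exact hμQ ▸ measure_mono (fun v hv => himg (gg i) v hv)
      have hmsQc : ∀ i ∈ tF, ms i Qᶜ = 0 := fun i hi => compl_null_of_one hQmeas (hmsQ i hi)
      have hbs : ∀ i ∈ tF, IsBary (ms i) (z i) := by
        intro i hi
        have h := isBary_map hQcomp hμQc (hσcont (gg i)) hb₀
        rwa [hgg i hi] at h
      set ν : Measure V := ∑ i ∈ tF, ENNReal.ofReal (w i) • ms i with hν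
      have hν_apply : ∀ S : Set V, ν S = ∑ i ∈ tF, ENNReal.ofReal (w i) * ms i S := by
        intro S
        rw [hν, show ((∑ i ∈ tF, ENNReal.ofReal (w i) • ms i : Measure V)) S
            = ∑ i ∈ tF, (ENNReal.ofReal (w i) • ms i) S from by
          rw [Measure.coe_finset_sum]
          exact Finset.sum_apply _ _ _]
        rfl
      haveI hνP : IsProbabilityMeasure ν := by
        constructor
        rw [hν_apply Set.univ]
        simp only [measure_univ, mul_one]
        rw [← ENNReal.ofReal_sum_of_nonneg hw0, hw1, ENNReal.ofReal_one]
      have hνQ : ν Q = 1 := by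
        rw [hν_apply Q]
        calc ∑ i ∈ tF, ENNReal.ofReal (w i) * ms i Q
            = ∑ i ∈ tF, ENNReal.ofReal (w i) :=
              Finset.sum_congr rfl fun i hi => by rw [hmsQ i hi, mul_one]
          _ = 1 := by rw [← ENNReal.ofReal_sum_of_nonneg hw0, hw1, ENNReal.ofReal_one]
      have hνbary : IsBary ν p := by
        have h := isBary_finsum hQcomp tF w hw0 ms hmsQc z hbs
        rwa [← Finset.centerMass_eq_of_sum_1 tF z hw1, hcm] at h
      have hνlt := hWprop ν hνP hνQ p hνbary hpW
      by_contra hno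
      push_neg at hno
      have hge : ENNReal.ofReal (1/(n+1)) ≤ ν (Q \ Metric.ball x₀ (1/(n+1))) := by
        rw [hν_apply]
        calc ENNReal.ofReal (1/(n+1))
            = (∑ i ∈ tF, ENNReal.ofReal (w i)) * ENNReal.ofReal (1/(n+1)) := by
              rw [← ENNReal.ofReal_sum_of_nonneg hw0, hw1, ENNReal.ofReal_one, one_mul]
          _ = ∑ i ∈ tF, ENNReal.ofReal (w i) * ENNReal.ofReal (1/(n+1)) := Finset.sum_mul _ _ _
          _ ≤ ∑ i ∈ tF, ENNReal.ofReal (w i) * ms i (Q \ Metric.ball x₀ (1/(n+1))) :=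
              Finset.sum_le_sum fun i _ => mul_le_mul_right (hno (gg i)) _
      exact absurd hνlt (not_lt.mpr hge)
    choose gs hgs using hstep
    refine ⟨gs, x₀, hx₀E, ?_⟩
    apply MeasureTheory.tendsto_of_forall_isOpen_le_liminf
    intro Uo hUo
    by_cases hx₀U : x₀ ∈ Uo
    · obtain ⟨r, hrpos, hrsub⟩ := Metric.isOpen_iff.mp hUo x₀ hx₀U
      obtain ⟨N, hN⟩ := exists_nat_gt (1/r)
      have hmapQ : ∀ n : ℕ, Measure.map (σ (gs n)) (μ : Measure V) Q = 1 := by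
        intro n
        rw [Measure.map_apply (hσcont (gs n)).measurable hQmeas]
        haveI : IsProbabilityMeasure (Measure.map (σ (gs n)) (μ : Measure V)) :=
          Measure.isProbabilityMeasure_map (hσcont (gs n)).measurable.aemeasurable
        rw [← Measure.map_apply (hσcont (gs n)).measurable hQmeas]
        refine le_antisymm prob_le_one ?_
        rw [Measure.map_apply (hσcont (gs n)).measurable hQmeas]
        exact hμQ ▸ measure_mono (fun v hv => himg (gs n) v hv)
      have hlow : ∀ᶠ (n : ℕ) in atTop,
          (1 - Real.toNNReal (1/(n+1)) : ℝ≥0) ≤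
            (μ.map ((hσcont (gs n)).measurable.aemeasurable)) Uo := by
        filter_upwards [Filter.eventually_ge_atTop N] with n hn
        haveI : IsProbabilityMeasure (Measure.map (σ (gs n)) (μ : Measure V)) :=
          Measure.isProbabilityMeasure_map (hσcont (gs n)).measurable.aemeasurable
        have hεr : (1:ℝ)/(n+1) ≤ r := by
          have h1 : (1:ℝ)/r < N + 1 := hN.trans_le (by exact_mod_cast Nat.le_succ N)
          have h2 : (N:ℝ) + 1 ≤ n + 1 := by exact_mod_cast Nat.succ_le_succ hn
          rw [div_le_iff₀ (by positivity)]
          rw [div_lt_iff₀ hrpos] at h1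
          nlinarith
        have hballU : Q ∩ Metric.ball x₀ (1/(n+1)) ⊆ Uo := fun v hv =>
          hrsub (Metric.ball_subset_ball hεr hv.2)
        have hsum : Measure.map (σ (gs n)) (μ : Measure V) Q ≤
            Measure.map (σ (gs n)) (μ : Measure V) (Q ∩ Metric.ball x₀ (1/(n+1))) +
            Measure.map (σ (gs n)) (μ : Measure V) (Q \ Metric.ball x₀ (1/(n+1))) := by
          refine le_trans (measure_mono ?_) (measure_union_le _ _)
          intro v hv
          by_cases h : v ∈ Metric.ball x₀ (1/(n+1))
          · exact Or.inl ⟨hv, h⟩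
          · exact Or.inr ⟨hv, h⟩
        have hmain : (1:ℝ≥0∞) - ENNReal.ofReal (1/(n+1)) ≤
            Measure.map (σ (gs n)) (μ : Measure V) Uo := by
          refine le_trans ?_ (measure_mono hballU)
          rw [hmapQ n] at hsum
          have h3 := (hgs n).le
          calc (1:ℝ≥0∞) - ENNReal.ofReal (1/(n+1))
              ≤ 1 - Measure.map (σ (gs n)) (μ : Measure V) (Q \ Metric.ball x₀ (1/(n+1))) :=
                tsub_le_tsub_left h3 1
            _ ≤ Measure.map (σ (gs n)) (μ : Measure V) (Q ∩ Metric.ball x₀ (1/(n+1))) :=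
                tsub_le_iff_right.mpr hsum
        have hco : ((1 - Real.toNNReal (1/(n+1)) : ℝ≥0) : ℝ≥0∞) ≤
            ((μ.map ((hσcont (gs n)).measurable.aemeasurable)) Uo : ℝ≥0∞) := by
          rw [ProbabilityMeasure.ennreal_coeFn_eq_coeFn_toMeasure,
            ProbabilityMeasure.toMeasure_map]
          refine le_trans ?_ hmain
          rw [ENNReal.coe_sub, ENNReal.coe_one]
          rfl
        exact_mod_cast hco
      have hup : ∀ᶠ (n : ℕ) in atTop,
          (μ.map ((hσcont (gs n)).measurable.aemeasurable)) Uo ≤ 1 :=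
        Filter.Eventually.of_forall fun n => ProbabilityMeasure.apply_le_one _ _
      have hlowt : Tendsto (fun n : ℕ => (1 - Real.toNNReal (1/(n+1)) : ℝ≥0)) atTop (𝓝 1) := by
        have h0 : Tendsto (fun n : ℕ => Real.toNNReal (1/(n+1))) atTop (𝓝 0) := by
          rw [← NNReal.tendsto_coe]
          have heq : ∀ n : ℕ, ((Real.toNNReal (1/(n+1)) : ℝ≥0) : ℝ) = 1/(n+1) := fun n =>
            Real.coe_toNNReal _ (by positivity)
          simp only [heq, NNReal.coe_zero]
          exact tendsto_one_div_add_atTop_nhds_zero_nat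
        have h1 := Tendsto.sub (tendsto_const_nhds (x := (1:ℝ≥0))) h0
        simpa using h1
      have htend : Tendsto
          (fun n => (μ.map ((hσcont (gs n)).measurable.aemeasurable)) Uo) atTop (𝓝 1) :=
        tendsto_of_tendsto_of_tendsto_of_le_of_le' hlowt tendsto_const_nhds hlow hup
      rw [htend.liminf_eq]
      exact ProbabilityMeasure.apply_le_one _ _
    · have hz : (diracPM x₀ : ProbabilityMeasure V) Uo = 0 := by
        have h1 : ((diracPM x₀ : ProbabilityMeasure V) Uo : ℝ≥0∞) = (Measure.dirac x₀) Uo :=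
          ProbabilityMeasure.ennreal_coeFn_eq_coeFn_toMeasure _ _
        have h2 : (Measure.dirac x₀) Uo = 0 := by
          rw [Measure.dirac_apply' _ hUo.measurableSet]
          simp [hx₀U]
        rw [h2] at h1
        exact_mod_cast h1
      rw [hz]
      exact zero_le
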